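/- Let k be a positive integer and for each i ∈ {1,…,k} let P_i and Q_i be discrete probability distributions on a countable set A_i with equal support, such that D_subG(P_i‖Q_i) ⪯ (μ_i, τ_i). Then the product distributions P = P₁ ⊗ ⋯ ⊗ P_k and Q = Q₁ ⊗ ⋯ ⊗ Q_k on A₁ × ⋯ × A_k satisfy D_subG(P‖Q) ⪯ (μ₁+⋯+μ_k, sqrt(τ₁²+⋯+τ_k²)). -/

import Mathlib

open MeasureTheory
open scoped ENNReal

noncomputable def KL {α : Type*} (P Q : PMF α) : ℝ :=
  ∑' x, (P x).toReal * Real.log ((P x).toReal / (Q x).toReal)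

def DsubG {α : Type*} (P Q : PMF α) (μ τ : ℝ) : Prop :=
  KL P Q ≤ μ ∧
  ∀ l : ℝ,
    (∑' x, (P x).toReal *
        Real.exp (l * (Real.log ((P x).toReal / (Q x).toReal) - KL P Q)))
      ≤ Real.exp (l ^ 2 * τ ^ 2 / 2)

namespace CDPAux

lemma summable_iff_ofReal {ι : Type*} (f : ι → ℝ) (hf : ∀ x, 0 ≤ f x) :
    Summable f ↔ (∑' x, ENNReal.ofReal (f x)) ≠ ∞ := by
  constructor
  · intro hs
    rw [← ENNReal.ofReal_tsum_of_nonneg hf hs]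
    exact ENNReal.ofReal_ne_top
  · intro hne
    exact (ENNReal.summable_toReal hne).congr fun x => ENNReal.toReal_ofReal (hf x)

lemma tsum_eq_toReal {ι : Type*} (f : ι → ℝ) (hf : ∀ x, 0 ≤ f x) (hs : Summable f) :
    ∑' x, f x = (∑' x, ENNReal.ofReal (f x)).toReal := by
  rw [← ENNReal.ofReal_tsum_of_nonneg hf hs, ENNReal.toReal_ofReal (tsum_nonneg hf)]

lemma tsum_pi_prod : ∀ (k : ℕ) (A : Fin k → Type u) (f : ∀ i, A i → ℝ≥0∞),
    ∑' x : ∀ i, A i, ∏ i, f i (x i) = ∏ i, ∑' y, f i y := by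
  intro k
  induction k with
  | zero =>
    intro A f
    simp only [Finset.univ_eq_empty, Finset.prod_empty]
    exact tsum_eq_single (fun i => i.elim0) (fun b hb => absurd (Subsingleton.elim _ _) hb)
  | succ n ih =>
    intro A f
    rw [← (Fin.consEquiv A).tsum_eq]
    have : ∀ p : A 0 × (∀ i : Fin n, A i.succ),
        ∏ i, f i (Fin.consEquiv A p i)
          = f 0 p.1 * ∏ i : Fin n, f i.succ (p.2 i) := by
      rintro ⟨a, g⟩
      rw [Fin.prod_univ_succ]
      simp [Fin.consEquiv]
    rw [tsum_congr this, ENNReal.tsum_prod']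
    simp_rw [ENNReal.tsum_mul_left, ENNReal.tsum_mul_right]
    rw [ih, Fin.prod_univ_succ]

lemma marg {k : ℕ} {A : Fin k → Type*} (P : ∀ i, PMF (A i)) (i : Fin k) (g : A i → ℝ≥0∞) :
    ∑' x : ∀ j, A j, (∏ j, P j (x j)) * g (x i) = ∑' y, P i y * g y := by
  classical
  set F : ∀ j, A j → ℝ≥0∞ :=
    Function.update (fun j => (⇑(P j) : A j → ℝ≥0∞)) i (fun y => P i y * g y) with hF
  have hFi : F i = fun y => P i y * g y := Function.update_self _ _ _
  have hFj : ∀ j, j ≠ i → F j = ⇑(P j) := fun j hj => Function.update_of_ne hj _ _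
  have key : ∀ (t : ∀ j, (A j → ℝ≥0∞) → ℝ≥0∞),
      ∏ j, t j (F j) = t i (fun y => P i y * g y) * ∏ j ∈ Finset.univ.erase i, t j (⇑(P j)) := by
    intro t
    rw [← Finset.mul_prod_erase Finset.univ (fun j => t j (F j)) (Finset.mem_univ i), hFi]
    congr 1
    exact Finset.prod_congr rfl fun j hj => by rw [hFj j (Finset.mem_erase.mp hj).1]
  have hpt : ∀ x : ∀ j, A j, (∏ j, P j (x j)) * g (x i) = ∏ j, F j (x j) := by
    intro x
    rw [key (fun j u => u (x j)),
      ← Finset.mul_prod_erase Finset.univ (fun j => P j (x j)) (Finset.mem_univ i)]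
    ring
  rw [tsum_congr hpt, tsum_pi_prod, key (fun j u => ∑' y, u y)]
  have h1 : ∏ j ∈ Finset.univ.erase i, ∑' y, P j y = 1 :=
    Finset.prod_eq_one fun j _ => (P j).tsum_coe
  rw [h1, mul_one]

lemma pmf_summable_toReal {α : Type*} (P : PMF α) : Summable fun y => (P y).toReal :=
  ENNReal.summable_toReal P.tsum_coe_ne_top

lemma pmf_tsum_toReal {α : Type*} (P : PMF α) : ∑' y, (P y).toReal = 1 := by
  rw [← ENNReal.tsum_toReal_eq fun a => P.apply_ne_top a, P.tsum_coe, ENNReal.toReal_one]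

lemma KL_nonneg {α : Type*} (P Q : PMF α) (hsupp : P.support = Q.support) : 0 ≤ KL P Q := by
  by_cases hS : Summable fun y => (P y).toReal * Real.log ((P y).toReal / (Q y).toReal)
  · set p : α → ℝ := fun y => (P y).toReal with hp
    set q : α → ℝ := fun y => (Q y).toReal with hq
    have hq0 : ∀ y, P y = 0 ↔ Q y = 0 := by
      intro y
      have := Set.ext_iff.mp hsupp y
      simp only [PMF.mem_support_iff] at this
      exact not_iff_not.mp this
    have hu : Summable fun y => q y - p y := (pmf_summable_toReal Q).sub (pmf_summable_toReal P)
    have hut : ∑' y, (q y - p y) = 0 := by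
      rw [Summable.tsum_sub (pmf_summable_toReal Q) (pmf_summable_toReal P), pmf_tsum_toReal,
        pmf_tsum_toReal, sub_self]
    have hvn : ∀ y, 0 ≤ (q y - p y) + p y * Real.log (p y / q y) := by
      intro y
      by_cases hy : P y = 0
      · have hqy : Q y = 0 := (hq0 y).mp hy
        simp [hp, hq, hy, hqy]
      · have hqy : Q y ≠ 0 := fun hc => hy ((hq0 y).mpr hc)
        have hppos : 0 < p y := ENNReal.toReal_pos hy (P.apply_ne_top y)
        have hqpos : 0 < q y := ENNReal.toReal_pos hqy (Q.apply_ne_top y)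
        have hlog : Real.log (q y / p y) ≤ q y / p y - 1 :=
          Real.log_le_sub_one_of_pos (div_pos hqpos hppos)
        have h1 : Real.log (p y / q y) = -Real.log (q y / p y) := by
          rw [← Real.log_inv, inv_div]
        have h2 : p y * (q y / p y - 1) = q y - p y := by
          field_simp
        nlinarith [mul_le_mul_of_nonneg_left hlog hppos.le]
    have h0 : 0 ≤ ∑' y, ((q y - p y) + p y * Real.log (p y / q y)) := tsum_nonneg hvn
    rw [Summable.tsum_add hu hS, hut, zero_add] at h0
    exact h0
  · unfold KL
    rw [tsum_eq_zero_of_not_summable hS]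

end CDPAux

open CDPAux in
/-- **Composition (product form) of concentrated differential privacy.** For discrete
distributions `P i, Q i` with equal supports and `D_subG(P i‖Q i) ⪯ (μ i, τ i)` for each
`i < k`, the product distributions `P = ⊗ᵢ P i` and `Q = ⊗ᵢ Q i` satisfy
`D_subG(P‖Q) ⪯ (Σ μ i, sqrt (Σ (τ i)²))`. -/
theorem cdp_composition (k : ℕ) (hk : 0 < k) {A : Fin k → Type*}
    [∀ i, Countable (A i)] [∀ i, MeasurableSpace (A i)] [∀ i, MeasurableSingletonClass (A i)]
    (P Q : ∀ i, PMF (A i)) (μ τ : Fin k → ℝ)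
    (hsupp : ∀ i, (P i).support = (Q i).support)
    (h : ∀ i, DsubG (P i) (Q i) (μ i) (τ i)) :
    DsubG (Measure.pi fun i => (P i).toMeasure).toPMF
      (Measure.pi fun i => (Q i).toMeasure).toPMF
      (∑ i, μ i) (Real.sqrt (∑ i, (τ i) ^ 2)) := by
  classical
  set PP : PMF (∀ i, A i) := (Measure.pi fun i => (P i).toMeasure).toPMF with hPPdef
  set QQ : PMF (∀ i, A i) := (Measure.pi fun i => (Q i).toMeasure).toPMF with hQQdef
  -- values of the product PMFs
  have happ : ∀ x, PP x = ∏ i, P i (x i) := by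
    intro x
    show (Measure.pi fun i => (P i).toMeasure) {x} = _
    rw [← Set.univ_pi_singleton x, Measure.pi_pi]
    exact Finset.prod_congr rfl fun i _ =>
      (P i).toMeasure_apply_singleton _ (measurableSet_singleton _)
  have happq : ∀ x, QQ x = ∏ i, Q i (x i) := by
    intro x
    show (Measure.pi fun i => (Q i).toMeasure) {x} = _
    rw [← Set.univ_pi_singleton x, Measure.pi_pi]
    exact Finset.prod_congr rfl fun i _ =>
      (Q i).toMeasure_apply_singleton _ (measurableSet_singleton _)
  have hPne : ∀ (x : ∀ i, A i), (∏ i, P i (x i)) ≠ ∞ :=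
    fun x => ENNReal.prod_ne_top fun i _ => (P i).apply_ne_top _
  have hPPreal : ∀ x, (PP x).toReal = ∏ i, ((P i) (x i)).toReal := by
    intro x; rw [happ, ENNReal.toReal_prod]
  have hQQreal : ∀ x, (QQ x).toReal = ∏ i, ((Q i) (x i)).toReal := by
    intro x; rw [happq, ENNReal.toReal_prod]
  have hsupp' : ∀ i (y : A i), P i y = 0 ↔ Q i y = 0 := by
    intro i y
    have := Set.ext_iff.mp (hsupp i) y
    simp only [PMF.mem_support_iff] at this
    exact not_iff_not.mp this
  -- the log of the product splits as a sum on the support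
  have hlogsplit : ∀ x, PP x ≠ 0 →
      Real.log ((PP x).toReal / (QQ x).toReal) = ∑ i, Real.log (((P i) (x i)).toReal / ((Q i) (x i)).toReal) := by
    intro x hx
    rw [happ] at hx
    have hPi : ∀ i, P i (x i) ≠ 0 := by
      intro i
      intro h0
      exact hx (Finset.prod_eq_zero (Finset.mem_univ i) h0)
    have hQi : ∀ i, Q i (x i) ≠ 0 := fun i h0 => hPi i ((hsupp' i (x i)).mpr h0)
    have hpi : ∀ i, ((P i) (x i)).toReal ≠ 0 := fun i =>
      ENNReal.toReal_ne_zero.mpr ⟨hPi i, (P i).apply_ne_top _⟩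
    have hqi : ∀ i, ((Q i) (x i)).toReal ≠ 0 := fun i =>
      ENNReal.toReal_ne_zero.mpr ⟨hQi i, (Q i).apply_ne_top _⟩
    rw [hPPreal, hQQreal, ← Finset.prod_div_distrib]
    exact Real.log_prod fun i _ => div_ne_zero (hpi i) (hqi i)
  -- pointwise form of the KL summand
  have hfsum : ∀ x, (PP x).toReal * Real.log ((PP x).toReal / (QQ x).toReal)
      = ∑ i, (∏ j, ((P j) (x j)).toReal) * Real.log (((P i) (x i)).toReal / ((Q i) (x i)).toReal) := by
    intro x
    by_cases hx : PP x = 0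
    · have : (PP x).toReal = 0 := by rw [hx]; simp
      rw [this, zero_mul]
      rw [hPPreal] at this
      simp [this]
    · rw [hlogsplit x hx, hPPreal, Finset.mul_sum]
  -- nonneg real marginalization (in ENNReal form)
  have margO : ∀ (i : Fin k) (g : A i → ℝ), (∀ y, 0 ≤ g y) →
      (∑' x : ∀ j, A j, ENNReal.ofReal ((∏ j, ((P j) (x j)).toReal) * g (x i)))
        = ∑' y, ENNReal.ofReal (((P i) y).toReal * g y) := by
    intro i g hg
    have h1 : ∀ x : ∀ j, A j, ENNReal.ofReal ((∏ j, ((P j) (x j)).toReal) * g (x i))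
        = (∏ j, P j (x j)) * ENNReal.ofReal (g (x i)) := by
      intro x
      rw [ENNReal.ofReal_mul (Finset.prod_nonneg fun j _ => ENNReal.toReal_nonneg)]
      congr 1
      rw [← ENNReal.toReal_prod, ENNReal.ofReal_toReal (hPne x)]
    have h2 : ∀ y, ENNReal.ofReal (((P i) y).toReal * g y) = P i y * ENNReal.ofReal (g y) := by
      intro y
      rw [ENNReal.ofReal_mul ENNReal.toReal_nonneg, ENNReal.ofReal_toReal ((P i).apply_ne_top y)]
    rw [tsum_congr h1, tsum_congr h2]
    exact marg P i fun y => ENNReal.ofReal (g y)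
  -- real marginalization for nonnegative functions
  have margN : ∀ (i : Fin k) (g : A i → ℝ), (∀ y, 0 ≤ g y) →
      Summable (fun y => ((P i) y).toReal * g y) →
      Summable (fun x : ∀ j, A j => (∏ j, ((P j) (x j)).toReal) * g (x i)) ∧
      ∑' x : ∀ j, A j, (∏ j, ((P j) (x j)).toReal) * g (x i) = ∑' y, ((P i) y).toReal * g y := by
    intro i g hg hs
    have hnnx : ∀ x : ∀ j, A j, 0 ≤ (∏ j, ((P j) (x j)).toReal) * g (x i) := fun x =>
      mul_nonneg (Finset.prod_nonneg fun j _ => ENNReal.toReal_nonneg) (hg _)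
    have hnny : ∀ y, 0 ≤ ((P i) y).toReal * g y := fun y =>
      mul_nonneg ENNReal.toReal_nonneg (hg y)
    have hne : (∑' x : ∀ j, A j,
        ENNReal.ofReal ((∏ j, ((P j) (x j)).toReal) * g (x i))) ≠ ∞ := by
      rw [margO i g hg]
      exact (summable_iff_ofReal _ hnny).mp hs
    have hsx := (summable_iff_ofReal _ hnnx).mpr hne
    refine ⟨hsx, ?_⟩
    rw [tsum_eq_toReal _ hnnx hsx, tsum_eq_toReal _ hnny hs, margO i g hg]
  -- real marginalization, signed
  have margR : ∀ (i : Fin k) (g : A i → ℝ), Summable (fun y => ((P i) y).toReal * g y) →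
      Summable (fun x : ∀ j, A j => (∏ j, ((P j) (x j)).toReal) * g (x i)) ∧
      ∑' x : ∀ j, A j, (∏ j, ((P j) (x j)).toReal) * g (x i) = ∑' y, ((P i) y).toReal * g y := by
    intro i g hg
    have hmax : ∀ a : ℝ, max a 0 = (a + |a|) / 2 := by
      intro a
      rcases le_total 0 a with ha | ha
      · rw [abs_of_nonneg ha, max_eq_left ha]; ring
      · rw [abs_of_nonpos ha, max_eq_right ha]; ring
    have hmul : ∀ y, ((P i) y).toReal * max (g y) 0 = max (((P i) y).toReal * g y) 0 := by
      intro y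
      rw [mul_max_of_nonneg _ _ ENNReal.toReal_nonneg, mul_zero]
    have hmul' : ∀ y, ((P i) y).toReal * max (-g y) 0 = max (-(((P i) y).toReal * g y)) 0 := by
      intro y
      rw [mul_max_of_nonneg _ _ ENNReal.toReal_nonneg, mul_zero, mul_neg]
    have hsp : Summable (fun y => ((P i) y).toReal * max (g y) 0) := by
      refine ((hg.add hg.abs).div_const 2).congr fun y => ?_
      rw [hmul y, hmax]
    have hsm : Summable (fun y => ((P i) y).toReal * max (-g y) 0) := by
      refine ((hg.neg.add hg.abs).div_const 2).congr fun y => ?_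
      rw [hmul' y, hmax, abs_neg]
    obtain ⟨hSp, hTp⟩ := margN i (fun y => max (g y) 0) (fun y => le_max_right _ _) hsp
    obtain ⟨hSm, hTm⟩ := margN i (fun y => max (-g y) 0) (fun y => le_max_right _ _) hsm
    have hxd : ∀ x : ∀ j, A j, (∏ j, ((P j) (x j)).toReal) * g (x i)
        = (∏ j, ((P j) (x j)).toReal) * max (g (x i)) 0
          - (∏ j, ((P j) (x j)).toReal) * max (-g (x i)) 0 := by
      intro x
      rw [← mul_sub, max_zero_sub_max_neg_zero_eq_self]
    have hyd : ∀ y, ((P i) y).toReal * g y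
        = ((P i) y).toReal * max (g y) 0 - ((P i) y).toReal * max (-g y) 0 := by
      intro y
      rw [← mul_sub, max_zero_sub_max_neg_zero_eq_self]
    constructor
    · exact (hSp.sub hSm).congr fun x => (hxd x).symm
    · rw [tsum_congr hxd, Summable.tsum_sub hSp hSm, hTp, hTm, tsum_congr hyd, Summable.tsum_sub hsp hsm]
  -- a support point in each coordinate
  have hx0ex : ∀ j, ∃ y : A j, P j y ≠ 0 := by
    intro j
    obtain ⟨y, hy⟩ := (P j).support_nonempty
    exact ⟨y, (PMF.mem_support_iff _ _).mp hy⟩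
  choose x0 hx0p using hx0ex
  -- if the product KL summand is summable, then each factor loss is integrable
  have hintf : (Summable fun x => (PP x).toReal * Real.log ((PP x).toReal / (QQ x).toReal)) →
      ∀ i, Summable fun y : A i =>
        ((P i) y).toReal * Real.log (((P i) y).toReal / ((Q i) y).toReal) := by
    intro hf i
    have hinj : Function.Injective (fun y : A i => Function.update x0 i y) :=
      Function.update_injective x0 i
    have hcomp := hf.comp_injective hinj
    set w : ℝ := ∏ j ∈ Finset.univ.erase i, ((P j) (x0 j)).toReal with hw
    have hwpos : 0 < w := Finset.prod_pos fun j _ =>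
      ENNReal.toReal_pos (hx0p j) ((P j).apply_ne_top _)
    set C0 : ℝ := ∑ j ∈ Finset.univ.erase i,
      Real.log (((P j) (x0 j)).toReal / ((Q j) (x0 j)).toReal) with hC0
    have hval : ∀ y : A i,
        (PP (Function.update x0 i y)).toReal *
          Real.log ((PP (Function.update x0 i y)).toReal / (QQ (Function.update x0 i y)).toReal)
        = w * (((P i) y).toReal * Real.log (((P i) y).toReal / ((Q i) y).toReal))
          + (w * C0) * ((P i) y).toReal := by
      intro y
      have hprodP : (PP (Function.update x0 i y)).toReal = ((P i) y).toReal * w := by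
        rw [hPPreal, ← Finset.mul_prod_erase Finset.univ _ (Finset.mem_univ i),
          Function.update_self, hw]
        congr 1
        exact Finset.prod_congr rfl fun j hj => by
          rw [Function.update_of_ne (Finset.mem_erase.mp hj).1]
      by_cases hy : P i y = 0
      · have hpy : ((P i) y).toReal = 0 := by rw [hy]; simp
        rw [hprodP, hpy]
        ring
      · have hne0 : PP (Function.update x0 i y) ≠ 0 := by
          rw [happ]
          refine Finset.prod_ne_zero_iff.mpr fun j _ => ?_
          by_cases hji : j = i
          · subst hji; rw [Function.update_self]; exact hy
          · rw [Function.update_of_ne hji]; exact hx0p j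
        rw [hlogsplit _ hne0, hprodP]
        have hsum : ∑ j, Real.log (((P j) (Function.update x0 i y j)).toReal /
              ((Q j) (Function.update x0 i y j)).toReal)
            = Real.log (((P i) y).toReal / ((Q i) y).toReal) + C0 := by
          rw [← Finset.add_sum_erase Finset.univ _ (Finset.mem_univ i), Function.update_self, hC0]
          congr 1
          exact Finset.sum_congr rfl fun j hj => by
            rw [Function.update_of_ne (Finset.mem_erase.mp hj).1]
        rw [hsum]
        ring
    have h1 : Summable (fun y : A i =>
        w * (((P i) y).toReal * Real.log (((P i) y).toReal / ((Q i) y).toReal))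
          + (w * C0) * ((P i) y).toReal) := hcomp.congr hval
    have h2 : Summable (fun y : A i =>
        w * (((P i) y).toReal * Real.log (((P i) y).toReal / ((Q i) y).toReal))) := by
      refine (h1.sub ((pmf_summable_toReal (P i)).mul_left (w * C0))).congr fun y => ?_
      ring
    refine (h2.mul_left w⁻¹).congr fun y => ?_
    rw [inv_mul_cancel_left₀ hwpos.ne']
  -- additivity of KL under summability
  have hKLadd : (Summable fun x => (PP x).toReal * Real.log ((PP x).toReal / (QQ x).toReal)) →
      KL PP QQ = ∑ i, KL (P i) (Q i) := by
    intro hf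
    have hmargs := fun i : Fin k => margR i
      (fun y => Real.log (((P i) y).toReal / ((Q i) y).toReal)) (hintf hf i)
    have h0 : KL PP QQ = ∑' x : ∀ j, A j,
        ∑ i, (∏ j, ((P j) (x j)).toReal) *
          Real.log (((P i) (x i)).toReal / ((Q i) (x i)).toReal) := tsum_congr hfsum
    rw [h0, Summable.tsum_finsetSum fun i _ => (hmargs i).1]
    exact Finset.sum_congr rfl fun i _ => (hmargs i).2
  -- integrability of each factor loss from finiteness of its MGF at l > 0
  refine ⟨?_, fun l => ?_⟩
  · -- KL bound
    by_cases hf : Summable fun x => (PP x).toReal * Real.log ((PP x).toReal / (QQ x).toReal)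
    · rw [hKLadd hf]
      exact Finset.sum_le_sum fun i _ => (h i).1
    · have h0 : KL PP QQ = 0 := tsum_eq_zero_of_not_summable hf
      rw [h0]
      exact Finset.sum_nonneg fun i _ =>
        le_trans (KL_nonneg (P i) (Q i) (hsupp i)) (h i).1
  · -- subgaussian bound
    have hsq : Real.sqrt (∑ i, τ i ^ 2) ^ 2 = ∑ i, τ i ^ 2 :=
      Real.sq_sqrt (Finset.sum_nonneg fun i _ => sq_nonneg _)
    rw [hsq]
    set C : ℝ := KL PP QQ with hC
    by_cases hgs : Summable fun x => (PP x).toReal *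
        Real.exp (l * (Real.log ((PP x).toReal / (QQ x).toReal) - C))
    swap
    · rw [tsum_eq_zero_of_not_summable hgs]
      positivity
    have hgnn : ∀ x, 0 ≤ (PP x).toReal *
        Real.exp (l * (Real.log ((PP x).toReal / (QQ x).toReal) - C)) :=
      fun x => mul_nonneg ENNReal.toReal_nonneg (Real.exp_pos _).le
    have hFreal : ∀ (i : Fin k) (y : A i),
        ENNReal.ofReal (((P i) y).toReal *
            Real.exp (l * Real.log (((P i) y).toReal / ((Q i) y).toReal)))
          = P i y * ENNReal.ofReal
              (Real.exp (l * Real.log (((P i) y).toReal / ((Q i) y).toReal))) := by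
      intro i y
      rw [ENNReal.ofReal_mul ENNReal.toReal_nonneg, ENNReal.ofReal_toReal ((P i).apply_ne_top y)]
    have hpoint : ∀ x : ∀ j, A j,
        ENNReal.ofReal ((PP x).toReal *
            Real.exp (l * (Real.log ((PP x).toReal / (QQ x).toReal) - C)))
          = ENNReal.ofReal (Real.exp (-(l * C))) *
            ∏ i, (P i (x i) * ENNReal.ofReal
              (Real.exp (l * Real.log (((P i) (x i)).toReal / ((Q i) (x i)).toReal)))) := by
      intro x
      by_cases hx : PP x = 0
      · have h1 : (PP x).toReal = 0 := by rw [hx]; simp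
        obtain ⟨i, -, hi⟩ := Finset.prod_eq_zero_iff.mp ((happ x).symm.trans hx)
        rw [h1, zero_mul, ENNReal.ofReal_zero,
          Finset.prod_eq_zero (Finset.mem_univ i) (by rw [hi, zero_mul]), mul_zero]
      · have hreal : (PP x).toReal * Real.exp (l * (Real.log ((PP x).toReal / (QQ x).toReal) - C))
            = Real.exp (-(l * C)) * ∏ i, (((P i) (x i)).toReal *
                Real.exp (l * Real.log (((P i) (x i)).toReal / ((Q i) (x i)).toReal))) := by
          rw [hlogsplit x hx, hPPreal]
          have harg : l * ((∑ i, Real.log (((P i) (x i)).toReal / ((Q i) (x i)).toReal)) - C)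
              = (∑ i, l * Real.log (((P i) (x i)).toReal / ((Q i) (x i)).toReal)) + (-(l * C)) := by
            rw [mul_sub, Finset.mul_sum]
            ring
          rw [harg, Real.exp_add, Real.exp_sum, Finset.prod_mul_distrib]
          ring
        rw [hreal, ENNReal.ofReal_mul (Real.exp_pos _).le,
          ENNReal.ofReal_prod_of_nonneg
            (fun i _ => mul_nonneg ENNReal.toReal_nonneg (Real.exp_pos _).le)]
        congr 1
        exact Finset.prod_congr rfl fun i _ => hFreal i (x i)
    have hENN : (∑' x : ∀ j, A j, ENNReal.ofReal ((PP x).toReal *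
          Real.exp (l * (Real.log ((PP x).toReal / (QQ x).toReal) - C))))
        = ENNReal.ofReal (Real.exp (-(l * C))) *
          ∏ i, ∑' y, (P i y * ENNReal.ofReal
            (Real.exp (l * Real.log (((P i) y).toReal / ((Q i) y).toReal)))) := by
      rw [tsum_congr hpoint, ENNReal.tsum_mul_left]
      congr 1
      exact tsum_pi_prod k A (fun i y => P i y * ENNReal.ofReal
        (Real.exp (l * Real.log (((P i) y).toReal / ((Q i) y).toReal))))
    have hne : (∑' x : ∀ j, A j, ENNReal.ofReal ((PP x).toReal *
        Real.exp (l * (Real.log ((PP x).toReal / (QQ x).toReal) - C)))) ≠ ⊤ :=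
      (summable_iff_ofReal _ hgnn).mp hgs
    have hMne0 : ∀ i, (∑' y, P i y * ENNReal.ofReal
        (Real.exp (l * Real.log (((P i) y).toReal / ((Q i) y).toReal)))) ≠ 0 := by
      intro i
      have hterm : (0 : ℝ≥0∞) < P i (x0 i) * ENNReal.ofReal
          (Real.exp (l * Real.log (((P i) (x0 i)).toReal / ((Q i) (x0 i)).toReal))) :=
        ENNReal.mul_pos (hx0p i) (ENNReal.ofReal_pos.mpr (Real.exp_pos _)).ne'
      have hle : P i (x0 i) * ENNReal.ofReal
          (Real.exp (l * Real.log (((P i) (x0 i)).toReal / ((Q i) (x0 i)).toReal)))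
          ≤ ∑' y, P i y * ENNReal.ofReal
            (Real.exp (l * Real.log (((P i) y).toReal / ((Q i) y).toReal))) :=
        ENNReal.le_tsum (x0 i)
      exact (hterm.trans_le hle).ne'
    have hprodne : (∏ i, ∑' y, P i y * ENNReal.ofReal
        (Real.exp (l * Real.log (((P i) y).toReal / ((Q i) y).toReal)))) ≠ ⊤ := by
      intro hT
      apply hne
      rw [hENN, hT, ENNReal.mul_top (ENNReal.ofReal_pos.mpr (Real.exp_pos _)).ne']
    have hMne : ∀ i, (∑' y, P i y * ENNReal.ofReal
        (Real.exp (l * Real.log (((P i) y).toReal / ((Q i) y).toReal)))) ≠ ⊤ := by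
      intro i hT
      apply hprodne
      rw [← Finset.mul_prod_erase Finset.univ _ (Finset.mem_univ i), hT]
      exact ENNReal.top_mul (Finset.prod_ne_zero_iff.mpr fun j _ => hMne0 j)
    have hMGFsummable : ∀ i, Summable fun y => ((P i) y).toReal *
        Real.exp (l * Real.log (((P i) y).toReal / ((Q i) y).toReal)) := by
      intro i
      refine (summable_iff_ofReal _
        (fun y => mul_nonneg ENNReal.toReal_nonneg (Real.exp_pos _).le)).mpr ?_
      rw [tsum_congr (fun y => hFreal i y)]
      exact hMne i
    have hMGFval : ∀ i, (∑' y, ((P i) y).toReal *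
          Real.exp (l * Real.log (((P i) y).toReal / ((Q i) y).toReal)))
        = (∑' y, P i y * ENNReal.ofReal
            (Real.exp (l * Real.log (((P i) y).toReal / ((Q i) y).toReal)))).toReal := by
      intro i
      rw [tsum_eq_toReal _ (fun y => mul_nonneg ENNReal.toReal_nonneg (Real.exp_pos _).le)
        (hMGFsummable i)]
      congr 1
      exact tsum_congr fun y => hFreal i y
    have hfac : ∀ i, (∑' y, ((P i) y).toReal *
          Real.exp (l * Real.log (((P i) y).toReal / ((Q i) y).toReal)))
        ≤ Real.exp (l ^ 2 * τ i ^ 2 / 2 + l * KL (P i) (Q i)) := by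
      intro i
      have hhyp := (h i).2 l
      have hptw : ∀ y, ((P i) y).toReal *
          Real.exp (l * (Real.log (((P i) y).toReal / ((Q i) y).toReal) - KL (P i) (Q i)))
          = (((P i) y).toReal *
              Real.exp (l * Real.log (((P i) y).toReal / ((Q i) y).toReal))) *
            Real.exp (-(l * KL (P i) (Q i))) := by
        intro y
        have harg : l * (Real.log (((P i) y).toReal / ((Q i) y).toReal) - KL (P i) (Q i))
            = l * Real.log (((P i) y).toReal / ((Q i) y).toReal) + (-(l * KL (P i) (Q i))) := by
          ring
        rw [harg, Real.exp_add, mul_assoc]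
      rw [tsum_congr hptw, tsum_mul_right] at hhyp
      have h2 := mul_le_mul_of_nonneg_right hhyp (Real.exp_pos (l * KL (P i) (Q i))).le
      rw [mul_assoc, ← Real.exp_add, neg_add_cancel, Real.exp_zero, mul_one,
        ← Real.exp_add] at h2
      exact h2
    -- the key sign fact
    have hkey : l * (∑ i, KL (P i) (Q i)) - l * C ≤ 0 := by
      rcases le_or_gt l 0 with hl | hl
      · by_cases hf : Summable fun x =>
            (PP x).toReal * Real.log ((PP x).toReal / (QQ x).toReal)
        · have hCeq : C = ∑ i, KL (P i) (Q i) := hC.trans (hKLadd hf)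
          simp only [hCeq, sub_self, le_refl]
        · have hC0 : C = 0 := hC.trans (tsum_eq_zero_of_not_summable hf)
          simp only [hC0, mul_zero, sub_zero]
          exact mul_nonpos_of_nonpos_of_nonneg hl
            (Finset.sum_nonneg fun i _ => KL_nonneg (P i) (Q i) (hsupp i))
      · -- l > 0 : every factor loss is integrable, hence C = ∑ KL
        have hfint : ∀ i, Summable fun y : A i =>
            ((P i) y).toReal * Real.log (((P i) y).toReal / ((Q i) y).toReal) := by
          intro i
          have hpos : Summable fun y : A i => ((P i) y).toReal *
              max (Real.log (((P i) y).toReal / ((Q i) y).toReal)) 0 := by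
            refine Summable.of_nonneg_of_le
              (fun y => mul_nonneg ENNReal.toReal_nonneg (le_max_right _ _))
              (fun y => ?_) ((hMGFsummable i).mul_left l⁻¹)
            set a : ℝ := Real.log (((P i) y).toReal / ((Q i) y).toReal) with ha
            set py : ℝ := ((P i) y).toReal with hpy
            have hpynn : 0 ≤ py := ENNReal.toReal_nonneg
            have key : l * (py * max a 0) ≤ py * Real.exp (l * a) := by
              rcases le_total 0 a with haa | haa
              · rw [max_eq_left haa]
                have h1 : l * a ≤ Real.exp (l * a) := by
                  linarith [Real.add_one_le_exp (l * a)]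
                calc l * (py * a) = py * (l * a) := by ring
                  _ ≤ py * Real.exp (l * a) := mul_le_mul_of_nonneg_left h1 hpynn
              · rw [max_eq_right haa, mul_zero, mul_zero]
                positivity
            calc py * max a 0 = l⁻¹ * (l * (py * max a 0)) := by
                  rw [inv_mul_cancel_left₀ hl.ne']
              _ ≤ l⁻¹ * (py * Real.exp (l * a)) :=
                  mul_le_mul_of_nonneg_left key (inv_pos.mpr hl).le
          have hneg : Summable fun y : A i => ((P i) y).toReal *
              max (-(Real.log (((P i) y).toReal / ((Q i) y).toReal))) 0 := by
            refine Summable.of_nonneg_of_le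
              (fun y => mul_nonneg ENNReal.toReal_nonneg (le_max_right _ _))
              (fun y => ?_) (pmf_summable_toReal (Q i))
            by_cases hy : P i y = 0
            · have : ((P i) y).toReal = 0 := by rw [hy]; simp
              rw [this, zero_mul]
              exact ENNReal.toReal_nonneg
            · have hqy : Q i y ≠ 0 := fun hc => hy ((hsupp' i y).mpr hc)
              have hppos : 0 < ((P i) y).toReal :=
                ENNReal.toReal_pos hy ((P i).apply_ne_top y)
              have hqpos : 0 < ((Q i) y).toReal :=
                ENNReal.toReal_pos hqy ((Q i).apply_ne_top y)
              set a : ℝ := Real.log (((P i) y).toReal / ((Q i) y).toReal) with ha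
              have hmaxle : max (-a) 0 ≤ Real.exp (-a) :=
                max_le (by linarith [Real.add_one_le_exp (-a)]) (Real.exp_pos _).le
              have hexp : Real.exp (-a) = ((Q i) y).toReal / ((P i) y).toReal := by
                rw [Real.exp_neg, ha, Real.exp_log (div_pos hppos hqpos), inv_div]
              calc ((P i) y).toReal * max (-a) 0
                  ≤ ((P i) y).toReal * Real.exp (-a) :=
                    mul_le_mul_of_nonneg_left hmaxle hppos.le
                _ = ((Q i) y).toReal := by
                    rw [hexp, mul_div_cancel₀ _ hppos.ne']
          exact (hpos.sub hneg).congr fun y => by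
            rw [← mul_sub, max_zero_sub_max_neg_zero_eq_self]
        have hf : Summable fun x =>
            (PP x).toReal * Real.log ((PP x).toReal / (QQ x).toReal) := by
          refine Summable.congr ?_ fun x => (hfsum x).symm
          exact summable_sum fun i _ => (margR i _ (hfint i)).1
        have hCeq : C = ∑ i, KL (P i) (Q i) := hC.trans (hKLadd hf)
        simp only [hCeq, sub_self, le_refl]
    -- put everything together
    rw [tsum_eq_toReal _ hgnn hgs, hENN, ENNReal.toReal_mul,
      ENNReal.toReal_ofReal (Real.exp_pos _).le, ENNReal.toReal_prod]
    have hprodle : (∏ i, (∑' y, P i y * ENNReal.ofReal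
          (Real.exp (l * Real.log (((P i) y).toReal / ((Q i) y).toReal)))).toReal)
        ≤ ∏ i, Real.exp (l ^ 2 * τ i ^ 2 / 2 + l * KL (P i) (Q i)) :=
      Finset.prod_le_prod (fun i _ => ENNReal.toReal_nonneg)
        (fun i _ => by rw [← hMGFval i]; exact hfac i)
    calc Real.exp (-(l * C)) * ∏ i, (∑' y, P i y * ENNReal.ofReal
          (Real.exp (l * Real.log (((P i) y).toReal / ((Q i) y).toReal)))).toReal
        ≤ Real.exp (-(l * C)) *
            ∏ i, Real.exp (l ^ 2 * τ i ^ 2 / 2 + l * KL (P i) (Q i)) :=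
          mul_le_mul_of_nonneg_left hprodle (Real.exp_pos _).le
      _ = Real.exp (l ^ 2 * (∑ i, τ i ^ 2) / 2 +
            (l * (∑ i, KL (P i) (Q i)) - l * C)) := by
          rw [← Real.exp_sum, ← Real.exp_add]
          congr 1
          rw [Finset.sum_add_distrib, Finset.mul_sum, Finset.mul_sum, Finset.sum_div]
          ring
      _ ≤ Real.exp (l ^ 2 * (∑ i, τ i ^ 2) / 2) := by
          apply Real.exp_le_exp.mpr
          linarith [hkey]
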